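/- Let u be a Lyndon word and write u = v w with v Lyndon and w nonempty, and let w = w1 w2 ... wN be the canonical factorization of w (each wi Lyndon, w1 ≥ w2 ≥ ... ≥ wN). Then every partial concatenation v w1, v w1 w2, ..., v w1 w2 ... wN is a Lyndon word. -/

import Mathlib

/- Words over a linearly ordered alphabet `I` are lists, compared by the
lexicographic order of Lean's `LinearOrder (List I)` instance, in which a word
is smaller than any word of which it is a proper prefix. -/

variable {I : Type*} [LinearOrder I]

/-- A nonempty word is *Lyndon* if it is lexicographically smaller than
every proper nonempty suffix of itself. -/
def IsLyndon (w : List I) : Prop :=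
  w ≠ [] ∧ ∀ i, 0 < i → i < w.length → w < w.drop i

/-- `r` is the longest proper suffix of `l` that is Lyndon
(the right factor `l^r` of the costandard factorization). -/
def LongestLyndonSuffix (l r : List I) : Prop :=
  r <:+ l ∧ r.length < l.length ∧ IsLyndon r ∧
    ∀ r', r' <:+ l → r'.length < l.length → IsLyndon r' → r'.length ≤ r.length

/-- `p` is the longest proper prefix of `l` that is Lyndon
(the left factor `l^{ls}` of the standard factorization). -/
def LongestLyndonPrefix (l p : List I) : Prop :=
  p <+: l ∧ p.length < l.length ∧ IsLyndon p ∧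
    ∀ p', p' <+: l → p'.length < l.length → IsLyndon p' → p'.length ≤ p.length

/-- `fs` is the canonical factorization of `w`: a nonempty, lexicographically
nonincreasing list of Lyndon words whose concatenation is `w`. -/
def IsCanonicalFactorization (w : List I) (fs : List (List I)) : Prop :=
  w = fs.flatten ∧ fs ≠ [] ∧ (∀ f ∈ fs, IsLyndon f) ∧ fs.Chain' (· ≥ ·)

namespace LyndonAux

/-- `a` is smaller than `b` at a genuine differing position. -/
def SLt (a b : List I) : Prop :=
  ∃ p x y s t, x < y ∧ a = p ++ x :: s ∧ b = p ++ y :: t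

theorem SLt.lt {a b : List I} (h : SLt a b) : a < b := by
  obtain ⟨p, x, y, s, t, hxy, rfl, rfl⟩ := h
  show List.Lex (· < ·) _ _
  exact List.Lex.append_left _ (List.Lex.rel hxy) p

theorem SLt.append {a b : List I} (h : SLt a b) (u v : List I) :
    SLt (a ++ u) (b ++ v) := by
  obtain ⟨p, x, y, s, t, hxy, rfl, rfl⟩ := h
  exact ⟨p, x, y, s ++ u, t ++ v, hxy, by simp, by simp⟩

theorem prefix_le {a b : List I} (h : a <+: b) : a ≤ b := by
  obtain ⟨t, rfl⟩ := h
  cases t with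
  | nil => simp
  | cons x t =>
    apply le_of_lt
    show List.Lex (· < ·) _ _
    induction a with
    | nil => exact List.Lex.nil
    | cons c a ih => exact List.Lex.cons ih

theorem prefix_lt {a b : List I} (h : a <+: b) (hl : a.length < b.length) : a < b := by
  refine lt_of_le_of_ne (prefix_le h) ?_
  intro he; subst he; omega

theorem lt_cases {a b : List I} (h : a < b) :
    SLt a b ∨ (a <+: b ∧ a.length < b.length) := by
  replace h : List.Lex (· < ·) a b := h
  induction h with
  | @nil a l => exact Or.inr ⟨List.nil_prefix, by simp⟩
  | @cons c l₁ l₂ h ih =>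
    rcases ih with hs | ⟨hp, hl⟩
    · obtain ⟨p, x, y, s, t, hxy, rfl, rfl⟩ := hs
      exact Or.inl ⟨c :: p, x, y, s, t, hxy, rfl, rfl⟩
    · exact Or.inr ⟨(List.cons_prefix_cons).2 ⟨rfl, hp⟩, by simpa⟩
  | @rel x l₁ y l₂ h => exact Or.inl ⟨[], x, y, l₁, l₂, h, rfl, rfl⟩

theorem le_cases {a b : List I} (h : a ≤ b) : SLt a b ∨ a <+: b := by
  rcases eq_or_lt_of_le h with rfl | h
  · exact Or.inr (List.prefix_refl a)
  · rcases lt_cases h with hs | ⟨hp, _⟩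
    · exact Or.inl hs
    · exact Or.inr hp

theorem append_lt_left {b c : List I} (h : b < c) (a : List I) : a ++ b < a ++ c := by
  replace h : List.Lex (· < ·) b c := h
  show List.Lex (· < ·) _ _
  exact List.Lex.append_left _ h a

theorem append_le_left {b c : List I} (h : b ≤ c) (a : List I) : a ++ b ≤ a ++ c := by
  rcases eq_or_lt_of_le h with rfl | h
  · exact le_refl _
  · exact le_of_lt (append_lt_left h a)

theorem slt_of_getElem {a b : List I} {j : ℕ} (hja : j < a.length) (hjb : j < b.length)
    (hag : ∀ i (hi : i < j), a[i]'(hi.trans hja) = b[i]'(hi.trans hjb))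
    (hlt : a[j] < b[j]) : SLt a b := by
  have htake : a.take j = b.take j := by
    apply List.ext_getElem
    · simp; omega
    · intro n h1 h2
      simp only [List.getElem_take]
      have hn : n < j := by simp at h1; omega
      exact hag n hn
  refine ⟨a.take j, a[j], b[j], a.drop (j + 1), b.drop (j + 1), hlt, ?_, ?_⟩
  · rw [← List.drop_eq_getElem_cons hja, List.take_append_drop]
  · rw [htake, ← List.drop_eq_getElem_cons hjb, List.take_append_drop]

theorem SLt.getElem {a b : List I} (h : SLt a b) :
    ∃ j, ∃ (hja : j < a.length) (hjb : j < b.length),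
      (∀ i (hi : i < j), a[i]'(hi.trans hja) = b[i]'(hi.trans hjb)) ∧ a[j] < b[j] := by
  obtain ⟨p, x, y, s, t, hxy, rfl, rfl⟩ := h
  refine ⟨p.length, by simp, by simp, ?_, ?_⟩
  · intro i hi
    rw [List.getElem_append_left hi, List.getElem_append_left hi]
  · rw [List.getElem_append_right (le_refl _), List.getElem_append_right (le_refl _)]
    simp
    exact hxy


/-- the `n`-th letter of the infinite periodic word `ℓ^∞`. -/
def pw (ℓ : List I) (h : ℓ ≠ []) (n : ℕ) : I :=
  ℓ[n % ℓ.length]'(Nat.mod_lt n (List.length_pos_iff.mpr h))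

theorem pw_eq {ℓ : List I} (h : ℓ ≠ []) {n : ℕ} (hn : n < ℓ.length) :
    pw ℓ h n = ℓ[n] := by
  simp [pw, Nat.mod_eq_of_lt hn]

theorem pw_add {ℓ : List I} (h : ℓ ≠ []) (n : ℕ) :
    pw ℓ h (ℓ.length + n) = pw ℓ h n := by
  simp [pw, Nat.add_mod_left]

/-- `t` is a prefix of the infinite word `f`. -/
def PrefF (t : List I) (f : ℕ → I) : Prop := ∀ i (hi : i < t.length), t[i] = f i

/-- `t` is strictly below the infinite word `f` at a genuine position. -/
def SltF (t : List I) (f : ℕ → I) : Prop :=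
  ∃ j, ∃ (hj : j < t.length), (∀ i (hi : i < j), t[i]'(hi.trans hj) = f i) ∧ t[j] < f j

/-- `t` is at most the infinite word `f`. -/
def LeF (t : List I) (f : ℕ → I) : Prop := SltF t f ∨ PrefF t f

theorem LeF.nil (f : ℕ → I) : LeF [] f := by
  exact Or.inr (fun i hi => by simp at hi)

theorem LeF.append {w t : List I} {f : ℕ → I} (hw : ∀ i (hi : i < w.length), w[i] = f i)
    (ht : LeF t (fun i => f (w.length + i))) : LeF (w ++ t) f := by
  rcases ht with ⟨j, hj, hag, hlt⟩ | hp
  · refine Or.inl ⟨w.length + j, by simp; omega, ?_, ?_⟩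
    · intro i hi
      rcases lt_or_ge i w.length with h | h
      · rw [List.getElem_append_left h]
        exact hw i h
      · rw [List.getElem_append_right h]
        have h2 : i - w.length < j := by omega
        have h3 : w.length + (i - w.length) = i := by omega
        rw [hag (i - w.length) h2]
        show f (w.length + (i - w.length)) = f i
        rw [h3]
    · rw [List.getElem_append_right (by omega : w.length ≤ w.length + j)]
      have h3 : w.length + j - w.length = j := by omega
      simp only [h3]
      exact hlt
  · refine Or.inr ?_
    intro i hi
    rcases lt_or_ge i w.length with h | h
    · rw [List.getElem_append_left h]
      exact hw i h
    · rw [List.getElem_append_right h]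
      have h2 : i - w.length < t.length := by simp at hi; omega
      have h3 : w.length + (i - w.length) = i := by omega
      rw [hp (i - w.length) h2]
      show f (w.length + (i - w.length)) = f i
      rw [h3]

theorem LeF.trans_shift {t : List I} {f g : ℕ → I} {J : ℕ}
    (ht : LeF t f) (hag : ∀ i, i < J → f i = g i) (hJ : f J < g J) : LeF t g := by
  rcases ht with ⟨j, hj, ha, hl⟩ | hp
  · rcases lt_or_ge j J with h | h
    · exact Or.inl ⟨j, hj, fun i hi => (ha i hi).trans (hag i (hi.trans h)),
        hl.trans_eq (hag j h)⟩
    · have hJt : J < t.length := lt_of_le_of_lt h hj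
      refine Or.inl ⟨J, hJt, fun i hi => (ha i (lt_of_lt_of_le hi h)).trans (hag i hi), ?_⟩
      rcases eq_or_lt_of_le h with rfl | h'
      · exact hl.trans hJ
      · exact (ha J h').trans_lt hJ
  · rcases lt_or_ge J t.length with h | h
    · exact Or.inl ⟨J, h, fun i hi => (hp i (hi.trans h)).trans (hag i hi),
        (hp J h).trans_lt hJ⟩
    · exact Or.inr (fun i hi => (hp i hi).trans (hag i (lt_of_lt_of_le hi h)))

/-- Workhorse: if `t ≤ f` and `v` agrees with `f` up to `J` where it exceeds `f`,
then `t ≤ v ++ t`. -/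
theorem le_append_of_LeF {t v : List I} {f : ℕ → I} {J : ℕ} (hJ : J < v.length)
    (ht : LeF t f) (hagv : ∀ i (hi : i < J), v[i]'(hi.trans hJ) = f i)
    (hlt : f J < v[J]) : t ≤ v ++ t := by
  have mk : ∀ m (hmt : m < t.length) (hmv : m < v.length),
      (∀ i (hi : i < m), t[i]'(hi.trans hmt) = v[i]'(hi.trans hmv)) →
      t[m] < v[m] → t ≤ v ++ t := by
    intro m hmt hmv hag hl
    refine le_of_lt (SLt.lt (slt_of_getElem hmt (show m < (v ++ t).length by simp; omega) ?_ ?_))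
    · intro i hi
      rw [List.getElem_append_left (hi.trans hmv)]
      exact hag i hi
    · rw [List.getElem_append_left hmv]
      exact hl
  rcases ht with ⟨j, hj, ha, hl⟩ | hp
  · rcases lt_or_ge j J with h | h
    · refine mk j hj (h.trans hJ) (fun i hi => (ha i hi).trans (hagv i (hi.trans h)).symm)
        (hl.trans_eq (hagv j h).symm)
    · have hJt : J < t.length := lt_of_le_of_lt h hj
      refine mk J hJt hJ (fun i hi => (ha i (lt_of_lt_of_le hi h)).trans (hagv i hi).symm) ?_
      rcases eq_or_lt_of_le h with rfl | h'
      · exact hl.trans hlt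
      · exact ((ha J h').trans_lt hlt)
  · rcases lt_or_ge J t.length with h | h
    · exact mk J h hJ (fun i hi => (hp i (hi.trans h)).trans (hagv i hi).symm)
        ((hp J h).trans_lt hlt)
    · refine prefix_le (List.IsPrefix.trans ?_ (List.prefix_append v t))
      rw [List.prefix_iff_eq_take]
      apply List.ext_getElem
      · simp; omega
      · intro n h1 h2
        rw [List.getElem_take]
        exact (hp n h1).trans (hagv n (lt_of_lt_of_le h1 h)).symm


theorem eq_append_drop_of_agree {ℓ t : List I} (hne : ℓ ≠ [])
    (hlen : ℓ.length ≤ t.length)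
    (hag : ∀ i (hi : i < ℓ.length), t[i]'(lt_of_lt_of_le hi hlen) = pw ℓ hne i) :
    ℓ ++ t.drop ℓ.length = t := by
  have h1 : ℓ = t.take ℓ.length := by
    apply List.ext_getElem
    · simp; omega
    · intro n h1 h2
      rw [List.getElem_take]
      rw [hag n h1, pw_eq hne h1]
  conv_rhs => rw [← List.take_append_drop ℓ.length t]
  rw [← h1]

theorem prefix_of_agree {ℓ t : List I} (hne : ℓ ≠ []) (hlen : t.length ≤ ℓ.length)
    (hag : ∀ i (hi : i < t.length), t[i] = pw ℓ hne i) : t <+: ℓ := by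
  rw [List.prefix_iff_eq_take]
  apply List.ext_getElem
  · simp; omega
  · intro n h1 h2
    rw [List.getElem_take]
    rw [hag n h1, pw_eq hne (lt_of_lt_of_le h1 hlen)]

theorem le_append_self_of_LeF {ℓ : List I} (hne : ℓ ≠ []) :
    ∀ n (t : List I), t.length ≤ n → LeF t (pw ℓ hne) → t ≤ ℓ ++ t := by
  intro n
  induction n with
  | zero =>
    intro t hl _
    have ht : t = [] := List.eq_nil_of_length_eq_zero (by omega)
    subst ht
    exact prefix_le List.nil_prefix
  | succ n ih =>
    intro t hl hLeF
    have hd : 0 < ℓ.length := List.length_pos_iff.mpr hne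
    rcases hLeF with ⟨j, hj, hag, hlt⟩ | hp
    · rcases lt_or_ge j ℓ.length with h | h
      · refine le_of_lt (SLt.lt (slt_of_getElem hj (show j < (ℓ ++ t).length by simp; omega)
          ?_ ?_))
        · intro i hi
          rw [List.getElem_append_left (hi.trans h)]
          rw [hag i hi, pw_eq hne (hi.trans h)]
        · rw [List.getElem_append_left h]
          rw [← pw_eq hne h]
          exact hlt
      · have hlt' : ℓ.length < t.length := lt_of_le_of_lt h hj
        have hag' : ∀ i (hi : i < ℓ.length), t[i]'(hi.trans hlt') = pw ℓ hne i :=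
          fun i hi => hag i (lt_of_lt_of_le hi h)
        have hpre := eq_append_drop_of_agree hne (le_of_lt hlt') hag'
        set t₂ := t.drop ℓ.length with ht2
        have hLeF₂ : LeF t₂ (pw ℓ hne) := by
          refine Or.inl ⟨j - ℓ.length, by rw [ht2, List.length_drop]; omega, ?_, ?_⟩
          · intro i hi
            simp only [ht2, List.getElem_drop]
            have h4 : ℓ.length + i < j := by omega
            rw [hag _ h4, pw_add]
          · have h3 : ℓ.length + (j - ℓ.length) = j := by omega
            simp only [ht2, List.getElem_drop]
            simp only [h3]
            have heq : pw ℓ hne (j - ℓ.length) = pw ℓ hne j := by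
              rw [← pw_add hne (j - ℓ.length), h3]
            rw [heq]
            exact hlt
        have := ih t₂ (by rw [ht2, List.length_drop]; omega) hLeF₂
        calc t = ℓ ++ t₂ := hpre.symm
        _ ≤ ℓ ++ (ℓ ++ t₂) := append_le_left this ℓ
        _ = ℓ ++ t := by rw [hpre]
    · rcases le_or_gt t.length ℓ.length with h | h
      · exact prefix_le ((prefix_of_agree hne h hp).trans (List.prefix_append ℓ t))
      · have hag' : ∀ i (hi : i < ℓ.length), t[i]'(hi.trans h) = pw ℓ hne i :=
          fun i hi => hp i (hi.trans h)
        have hpre := eq_append_drop_of_agree hne (le_of_lt h) hag'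
        set t₂ := t.drop ℓ.length with ht2
        have hLeF₂ : LeF t₂ (pw ℓ hne) := by
          refine Or.inr ?_
          intro i hi
          simp only [ht2, List.getElem_drop]
          have h4 : ℓ.length + i < t.length := by
            rw [ht2, List.length_drop] at hi; omega
          rw [hp _ h4, pw_add]
        have := ih t₂ (by rw [ht2, List.length_drop]; omega) hLeF₂
        calc t = ℓ ++ t₂ := hpre.symm
        _ ≤ ℓ ++ (ℓ ++ t₂) := append_le_left this ℓ
        _ = ℓ ++ t := by rw [hpre]

theorem le_append_pw {ℓ t : List I} (hne : ℓ ≠ []) (h : LeF t (pw ℓ hne)) : t ≤ ℓ ++ t :=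
  le_append_self_of_LeF hne t.length t le_rfl h


theorem lyndon_slt_drop {ℓ : List I} (h : IsLyndon ℓ) {i : ℕ} (h0 : 0 < i)
    (hi : i < ℓ.length) : SLt ℓ (ℓ.drop i) := by
  rcases lt_cases (h.2 i h0 hi) with hs | ⟨hp, hlen⟩
  · exact hs
  · exfalso
    rw [List.length_drop] at hlen
    omega

theorem le_append_of_le_head {w1 v t : List I} (hw1 : IsLyndon w1) (hv : IsLyndon v)
    (hle : w1 ≤ v) (ht : LeF t (pw w1 hw1.1)) : t ≤ v ++ t := by
  rcases le_cases hle with hs | hp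
  · obtain ⟨j, hja, hjb, hag, hlt⟩ := hs.getElem
    refine le_append_of_LeF hjb ht ?_ ?_
    · intro i hi
      rw [pw_eq hw1.1 (hi.trans hja)]
      exact (hag i hi).symm
    · rw [pw_eq hw1.1 hja]
      exact hlt
  · rcases eq_or_lt_of_le (List.IsPrefix.length_le hp) with heq | hlen
    · have hwv : w1 = v := hp.eq_of_length heq
      subst hwv
      exact le_append_pw hw1.1 ht
    · have hd : 0 < w1.length := List.length_pos_iff.mpr hw1.1
      obtain ⟨j, hja, hjb, hag, hlt⟩ := (lyndon_slt_drop hv hd hlen).getElem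
      rw [List.length_drop] at hjb
      have key : ∀ i, i < w1.length + j → ∀ (hi : i < v.length), v[i] = pw w1 hw1.1 i := by
        intro i
        induction i using Nat.strong_induction_on with
        | _ i IH =>
          intro hij hi
          rcases lt_or_ge i w1.length with h | h
          · rw [← hp.getElem h, pw_eq hw1.1 h]
          · have h2 : i - w1.length < j := by omega
            have h3 : w1.length + (i - w1.length) = i := by omega
            have h4 := hag (i - w1.length) h2
            rw [List.getElem_drop] at h4
            simp only [h3] at h4
            rw [← h4]
            have h5 := IH (i - w1.length) (by omega) (by omega) (by omega)
            rw [h5, ← pw_add hw1.1 (i - w1.length), h3]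
      have hJ : w1.length + j < v.length := by omega
      refine le_append_of_LeF hJ ht ?_ ?_
      · intro i hi
        exact key i hi _
      · have h6 := hlt
        rw [List.getElem_drop] at h6
        have h7 : pw w1 hw1.1 (w1.length + j) = v[j]'hja := by
          rw [pw_add, ← key j (by omega) hja]
        rw [h7]
        exact h6


theorem LeF_flatten {ℓ : List I} (hl : IsLyndon ℓ) (ws : List (List I))
    (hle : ∀ x ∈ ws, x ≤ ℓ) : LeF ws.flatten (pw ℓ hl.1) := by
  induction ws with
  | nil => exact LeF.nil _
  | cons w ws ih =>
    have hw : w ≤ ℓ := hle w (List.mem_cons_self)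
    have ihw : LeF ws.flatten (pw ℓ hl.1) :=
      ih (fun x hx => hle x (List.mem_cons_of_mem w hx))
    rw [List.flatten_cons]
    rcases le_cases hw with hs | hp
    · obtain ⟨j, hja, hjb, hag, hlt⟩ := hs.getElem
      refine Or.inl ⟨j, by simp; omega, ?_, ?_⟩
      · intro i hi
        rw [List.getElem_append_left (hi.trans hja), hag i hi, pw_eq hl.1 (hi.trans hjb)]
      · rw [List.getElem_append_left hja, pw_eq hl.1 hjb]
        exact hlt
    · have hlen := hp.length_le
      refine LeF.append ?_ ?_
      · intro i hi
        rw [hp.getElem hi, pw_eq hl.1 (lt_of_lt_of_le hi hlen)]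
      · rcases eq_or_lt_of_le hlen with heq | hlen'
        · have hwl : w = ℓ := hp.eq_of_length heq
          subst hwl
          have hfun : (fun i => pw w hl.1 (w.length + i)) = pw w hl.1 :=
            funext (pw_add hl.1)
          rw [hfun]
          exact ihw
        · rcases Nat.eq_zero_or_pos w.length with h0 | h0
          · have hwnil : w = [] := List.eq_nil_of_length_eq_zero h0
            subst hwnil
            simpa using ihw
          · obtain ⟨j, hja, hjb, hag, hlt⟩ := (lyndon_slt_drop hl h0 hlen').getElem
            rw [List.length_drop] at hjb
            refine LeF.trans_shift (g := fun i => pw ℓ hl.1 (w.length + i)) (J := j) ihw ?_ ?_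
            · intro i hi
              have h1 : i < ℓ.length := by omega
              have h2 : w.length + i < ℓ.length := by omega
              have h4 := hag i hi
              rw [List.getElem_drop] at h4
              show pw ℓ hl.1 i = pw ℓ hl.1 (w.length + i)
              rw [pw_eq hl.1 h1, pw_eq hl.1 h2]
              exact h4
            · have h2 : w.length + j < ℓ.length := by omega
              have h4 := hlt
              rw [List.getElem_drop] at h4
              show pw ℓ hl.1 j < pw ℓ hl.1 (w.length + j)
              rw [pw_eq hl.1 hja, pw_eq hl.1 h2]
              exact h4

theorem lyndon_append_lt {a b : List I} (ha : IsLyndon a) (hb : IsLyndon b)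
    (hab : a < b) : a ++ b < b := by
  rcases lt_cases hab with hs | ⟨hp, hlen⟩
  · have h := hs.append b []
    rw [List.append_nil] at h
    exact h.lt
  · obtain ⟨b₂, rfl⟩ := hp
    have h1 : a ++ b₂ < b₂ := by
      have := hb.2 a.length (List.length_pos_iff.mpr ha.1) (by simpa using hlen)
      rwa [List.drop_left] at this
    exact append_lt_left h1 a

theorem lyndon_append {a b : List I} (ha : IsLyndon a) (hb : IsLyndon b)
    (hab : a < b) : IsLyndon (a ++ b) := by
  have hab' := lyndon_append_lt ha hb hab
  refine ⟨by simp [ha.1], ?_⟩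
  intro i h0 hi
  rcases lt_trichotomy i a.length with h | h | h
  · have hdrop : (a ++ b).drop i = a.drop i ++ b := by
      rw [List.drop_append]
      have : i - a.length = 0 := by omega
      rw [this, List.drop_zero]
    rw [hdrop]
    exact ((lyndon_slt_drop ha h0 h).append b b).lt
  · subst h
    rw [List.drop_left]
    exact hab'
  · have hdrop : (a ++ b).drop i = b.drop (i - a.length) := by
      rw [List.drop_append]
      have h2 : a.drop i = [] := List.drop_eq_nil_of_le (by omega)
      rw [h2, List.nil_append]
    rw [hdrop]
    refine hab'.trans (hb.2 (i - a.length) (by omega) ?_)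
    rw [List.length_append] at hi
    omega

theorem head_factor_gt {v f1 : List I} {rest : List (List I)} (hv : IsLyndon v)
    (hu : IsLyndon (v ++ (f1 :: rest).flatten)) (hLy : ∀ f ∈ f1 :: rest, IsLyndon f)
    (hch : (f1 :: rest).Chain' (· ≥ ·)) : v < f1 := by
  by_contra hcon
  push_neg at hcon
  have hf1 : IsLyndon f1 := hLy f1 (List.mem_cons_self)
  have hall : ∀ x ∈ f1 :: rest, x ≤ f1 := by
    have hpw : (f1 :: rest).Pairwise (· ≥ ·) := (List.isChain_iff_pairwise).mp hch
    intro x hx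
    rcases List.mem_cons.mp hx with rfl | hx'
    · exact le_refl x
    · exact (List.pairwise_cons.mp hpw).1 x hx'
  have hLeF : LeF (f1 :: rest).flatten (pw f1 hf1.1) := LeF_flatten hf1 _ hall
  set w := (f1 :: rest).flatten with hwdef
  have hwle : w ≤ v ++ w := le_append_of_le_head hf1 hv hcon hLeF
  have hwne : w ≠ [] := by
    rw [hwdef, List.flatten_cons]
    intro h
    exact hf1.1 (List.append_eq_nil_iff.mp h).1
  have hult : v ++ w < w := by
    have h1 := hu.2 v.length (List.length_pos_iff.mpr hv.1)
      (by rw [List.length_append]; have := List.length_pos_iff.mpr hwne; omega)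
    rwa [List.drop_left] at h1
  exact absurd (hult.trans_le hwle) (lt_irrefl _)

end LyndonAux

/-- If a Lyndon word `u` splits as `u = v w` with `v` Lyndon and `w` nonempty, and
`w = w1 … wN` is the canonical factorization of `w`, then every partial concatenation
`v w1 … wk` (for `1 ≤ k ≤ N`) is Lyndon. -/
theorem partial_right_concat_lyndon (u v w : List I)
    (hu : IsLyndon u) (hv : IsLyndon v) (hw : w ≠ []) (hsplit : u = v ++ w)
    (fs : List (List I)) (hfac : IsCanonicalFactorization w fs) :
    ∀ k, 1 ≤ k → k ≤ fs.length → IsLyndon (v ++ (fs.take k).flatten) := by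
  subst hsplit
  suffices H : ∀ k (v w : List I) (fs : List (List I)), IsLyndon v → IsLyndon (v ++ w) →
      IsCanonicalFactorization w fs → 1 ≤ k → k ≤ fs.length →
      IsLyndon (v ++ (fs.take k).flatten) by
    intro k h1 h2
    exact H k v w fs hv hu hfac h1 h2
  intro k
  induction k with
  | zero => intro _ _ _ _ _ _ h1 _; omega
  | succ k ih =>
    intro v w fs hv hu hfac h1 hk
    obtain ⟨hwf, hne, hLy, hch⟩ := hfac
    cases fs with
    | nil => exact absurd rfl hne
    | cons f1 rest =>
      subst hwf
      have hvf1 : IsLyndon (v ++ f1) := by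
        have hlt := LyndonAux.head_factor_gt hv hu hLy hch
        exact LyndonAux.lyndon_append hv (hLy f1 (List.mem_cons_self)) hlt
      rcases Nat.eq_zero_or_pos k with rfl | hk0
      · simpa using hvf1
      · have hr : rest ≠ [] := by
          intro h
          subst h
          simp at hk
          omega
        have hu' : IsLyndon ((v ++ f1) ++ rest.flatten) := by
          rw [List.append_assoc]
          rw [List.flatten_cons] at hu
          exact hu
        have hfac' : IsCanonicalFactorization rest.flatten rest :=
          ⟨rfl, hr, fun f hf => hLy f (List.mem_cons_of_mem f1 hf), hch.tail⟩
        have hres := ih (v ++ f1) rest.flatten rest hvf1 hu' hfac' hk0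
          (by simp at hk ⊢; omega)
        simpa [List.take_succ_cons, List.flatten_cons, List.append_assoc] using hres
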